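/- Let V be a real normed vector space, H a real inner product space, and j : V → H a linear map. Let a : V × V → ℝ be a bilinear form that is coercive with constant α > 0 (a(v,v) ≥ α‖v‖² for all v ∈ V). Let C : V → V be a linear map and κ > 0 a constant such that ‖j(v) − j(C v)‖_H ≤ κ‖v‖ for all v ∈ V. Suppose e ∈ V and f ∈ H satisfy C e = 0 and a(e,e) = ⟨f, j(e)⟩_H. Then ‖e‖ ≤ (κ/α)‖f‖_H. -/

import Mathlib

/-- Abstract core of Theorem 4.1: energy error estimate for the ideal combined
multiscale method. -/
theorem stmt_1 {V H : Type*} [NormedAddCommGroup V] [NormedSpace ℝ V]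
    [NormedAddCommGroup H] [InnerProductSpace ℝ H]
    (j : V →ₗ[ℝ] H) (a : V →ₗ[ℝ] V →ₗ[ℝ] ℝ)
    (α : ℝ) (hα : 0 < α) (hcoer : ∀ v : V, α * ‖v‖ ^ 2 ≤ a v v)
    (C : V →ₗ[ℝ] V) (κ : ℝ) (hκ : 0 < κ)
    (hC : ∀ v : V, ‖j v - j (C v)‖ ≤ κ * ‖v‖)
    (e : V) (f : H) (hCe : C e = 0)
    (hae : a e e = (inner ℝ f (j e) : ℝ)) :
    ‖e‖ ≤ (κ / α) * ‖f‖ := by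
  have hje : ‖j e‖ ≤ κ * ‖e‖ := by
    have := hC e
    rw [hCe, map_zero, sub_zero] at this
    exact this
  have h1 : α * ‖e‖ ^ 2 ≤ ‖f‖ * (κ * ‖e‖) := by
    calc α * ‖e‖ ^ 2 ≤ a e e := hcoer e
      _ = inner ℝ f (j e) := hae
      _ ≤ ‖f‖ * ‖j e‖ := real_inner_le_norm f (j e)
      _ ≤ ‖f‖ * (κ * ‖e‖) := by
          exact mul_le_mul_of_nonneg_left hje (norm_nonneg f)
  rcases eq_or_lt_of_le (norm_nonneg e) with h | h
  · rw [← h]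
    positivity
  · rw [div_mul_eq_mul_div, le_div_iff₀ hα]
    nlinarith
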